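/- Let κ be a kernel with ‖κ‖₂ < ∞ and φ : X → [0,∞) a measurable function with φ ∈ L²(μ). Define iterates 𝒦⁰φ = φ and (𝒦ⁿφ)(x) = ∫_X κ(x,u) (𝒦ⁿ⁻¹φ)(u) dμ(u) (Lebesgue integrals of nonnegative functions, valued in [0,∞]). Then for every n ≥ 1 and every x ∈ X such that the function f_x := κ(x,·) lies in L²(μ), one has (𝒦ⁿφ)(x) ≤ ρ(κ)^{n−1} · ‖f_x‖_{L²(μ)} · ‖φ‖_{L²(μ)}. (Paper's contraction lemma for iterated kernels, Lemma 6.17 / theo:bp-contraction.) -/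

import Mathlib

open MeasureTheory ENNReal

/-- The integral operator associated with a kernel `κ`. -/
noncomputable def kernelOp {X : Type*} [MeasurableSpace X] (μ : Measure X)
    (κ : X → X → ℝ) (f : X → ℝ) : X → ℝ :=
  fun x => ∫ y, κ x y * f y ∂μ

/-- The operator norm `ρ(κ)` of the integral operator on `L²(μ)`. -/
noncomputable def opNorm {X : Type*} [MeasurableSpace X] (μ : Measure X)
    (κ : X → X → ℝ) : ℝ :=
  sSup {r : ℝ | ∃ f : X → ℝ, MemLp f 2 μ ∧ eLpNorm f 2 μ = 1 ∧
    r = (eLpNorm (kernelOp μ κ f) 2 μ).toReal}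

/-- Pointwise iterates of the kernel operator, as Lebesgue integrals of
nonnegative functions valued in `[0,∞]`: `𝒦⁰φ = φ`,
`(𝒦ⁿφ)(x) = ∫ κ(x,u) (𝒦ⁿ⁻¹φ)(u) dμ(u)`. -/
noncomputable def kIter {X : Type*} [MeasurableSpace X] (μ : Measure X)
    (κ : X → X → ℝ) (φ : X → ℝ) : ℕ → X → ℝ≥0∞
  | 0 => fun x => ENNReal.ofReal (φ x)
  | n + 1 => fun x => ∫⁻ u, ENNReal.ofReal (κ x u) * kIter μ κ φ n u ∂μ

set_option linter.unusedSectionVars false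

section Aux

variable {X : Type*} [MeasurableSpace X] {μ : Measure X} [IsFiniteMeasure μ]
  {κ : X → X → ℝ} {f g : X → ℝ}

lemma holder2 {f g : X → ℝ≥0∞} (hf : AEMeasurable f μ) (hg : AEMeasurable g μ) :
    ∫⁻ x, f x * g x ∂μ ≤ (∫⁻ x, f x ^ (2:ℝ) ∂μ) ^ (1/2:ℝ) * (∫⁻ x, g x ^ (2:ℝ) ∂μ) ^ (1/2:ℝ) := by
  simpa using ENNReal.lintegral_mul_le_Lp_mul_Lq μ
    Real.HolderConjugate.two_two hf hg

lemma eLpNorm_two_eq_lintegral_nnnorm {f : X → ℝ} :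
    eLpNorm f 2 μ = (∫⁻ x, (‖f x‖₊ : ℝ≥0∞) ^ (2:ℝ) ∂μ) ^ (1/2 : ℝ) := by
  rw [eLpNorm_eq_lintegral_rpow_enorm_toReal two_ne_zero ENNReal.ofNat_ne_top]
  norm_num
  rfl

lemma eLpNorm_two_eq_lintegral_ofReal {f : X → ℝ} (hf : ∀ x, 0 ≤ f x) :
    eLpNorm f 2 μ = (∫⁻ x, ENNReal.ofReal (f x) ^ (2:ℝ) ∂μ) ^ (1/2 : ℝ) := by
  rw [eLpNorm_two_eq_lintegral_nnnorm]
  congr 1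
  refine lintegral_congr fun x => ?_
  congr 1
  rw [← enorm_eq_nnnorm, ← ofReal_norm, Real.norm_of_nonneg (hf x)]

lemma kernelOp_congr_ae (h : f =ᵐ[μ] g) : kernelOp μ κ f = kernelOp μ κ g :=
  funext fun x => integral_congr_ae (h.mono fun y hy => by simp only [hy])

lemma kernelOp_sm (hκ : Measurable (fun p : X × X => κ p.1 p.2)) (hf : Measurable f) :
    StronglyMeasurable (kernelOp μ κ f) := by
  have : StronglyMeasurable fun p : X × X => κ p.1 p.2 * f p.2 :=
    (hκ.mul (hf.comp measurable_snd)).stronglyMeasurable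
  exact this.integral_prod_right'

lemma kernelOp_eLpNorm_le_meas (hκ : Measurable (fun p : X × X => κ p.1 p.2))
    (hf : Measurable f) :
    eLpNorm (kernelOp μ κ f) 2 μ ≤
      eLpNorm (fun p : X × X => κ p.1 p.2) 2 (μ.prod μ) * eLpNorm f 2 μ := by
  set A : X → ℝ≥0∞ := fun x => ∫⁻ y, (‖κ x y‖₊ : ℝ≥0∞) ^ (2:ℝ) ∂μ with hA
  set B : ℝ≥0∞ := ∫⁻ y, (‖f y‖₊ : ℝ≥0∞) ^ (2:ℝ) ∂μ with hB
  have hAmeas : Measurable A := Measurable.lintegral_prod_right (hκ.enorm.pow_const _)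
  have hpt : ∀ x, (‖kernelOp μ κ f x‖₊ : ℝ≥0∞) ≤ A x ^ (1/2:ℝ) * B ^ (1/2:ℝ) := by
    intro x
    calc (‖kernelOp μ κ f x‖₊ : ℝ≥0∞) ≤ ∫⁻ y, ‖κ x y * f y‖₊ ∂μ :=
          enorm_integral_le_lintegral_enorm _
      _ = ∫⁻ y, (‖κ x y‖₊ : ℝ≥0∞) * ‖f y‖₊ ∂μ := by simp [nnnorm_mul, ENNReal.coe_mul]
      _ ≤ A x ^ (1/2:ℝ) * B ^ (1/2:ℝ) :=
          holder2 ((hκ.comp measurable_prodMk_left).enorm.aemeasurable)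
            (hf.enorm.aemeasurable)
  have key : ∫⁻ x, (‖kernelOp μ κ f x‖₊ : ℝ≥0∞) ^ (2:ℝ) ∂μ ≤ (∫⁻ x, A x ∂μ) * B := by
    calc ∫⁻ x, (‖kernelOp μ κ f x‖₊ : ℝ≥0∞) ^ (2:ℝ) ∂μ
        ≤ ∫⁻ x, (A x ^ (1/2:ℝ) * B ^ (1/2:ℝ)) ^ (2:ℝ) ∂μ :=
          lintegral_mono fun x => ENNReal.rpow_le_rpow (hpt x) (by norm_num)
      _ = ∫⁻ x, A x * B ∂μ := by
          refine lintegral_congr fun x => ?_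
          rw [ENNReal.mul_rpow_of_nonneg _ _ (by norm_num : (0:ℝ) ≤ 2),
            ← ENNReal.rpow_mul, ← ENNReal.rpow_mul]
          norm_num
      _ = (∫⁻ x, A x ∂μ) * B := lintegral_mul_const _ hAmeas
  have hprod : ∫⁻ x, A x ∂μ = ∫⁻ p : X × X, (‖κ p.1 p.2‖₊ : ℝ≥0∞) ^ (2:ℝ) ∂(μ.prod μ) :=
    (lintegral_prod _ (hκ.enorm.pow_const _).aemeasurable).symm
  rw [eLpNorm_two_eq_lintegral_nnnorm, eLpNorm_two_eq_lintegral_nnnorm,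
    eLpNorm_two_eq_lintegral_nnnorm, ← hprod, ← hB,
    ← ENNReal.mul_rpow_of_nonneg _ _ (by norm_num : (0:ℝ) ≤ 1/2)]
  exact ENNReal.rpow_le_rpow key (by norm_num)

lemma kernelOp_eLpNorm_le (hκ : Measurable (fun p : X × X => κ p.1 p.2))
    (hf : AEMeasurable f μ) :
    eLpNorm (kernelOp μ κ f) 2 μ ≤
      eLpNorm (fun p : X × X => κ p.1 p.2) 2 (μ.prod μ) * eLpNorm f 2 μ := by
  rw [kernelOp_congr_ae hf.ae_eq_mk, eLpNorm_congr_ae hf.ae_eq_mk]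
  exact kernelOp_eLpNorm_le_meas hκ hf.measurable_mk

lemma opNorm_nonneg : 0 ≤ opNorm μ κ :=
  Real.sSup_nonneg (by rintro r ⟨f, -, -, rfl⟩; exact ENNReal.toReal_nonneg)

lemma kernelOp_le_opNorm (hκ : Measurable (fun p : X × X => κ p.1 p.2))
    (hκ_HS : MemLp (fun p : X × X => κ p.1 p.2) 2 (μ.prod μ))
    (hf2 : MemLp f 2 μ) :
    eLpNorm (kernelOp μ κ f) 2 μ ≤ ENNReal.ofReal (opNorm μ κ) * eLpNorm f 2 μ := by
  have hbdd : BddAbove {r : ℝ | ∃ f : X → ℝ, MemLp f 2 μ ∧ eLpNorm f 2 μ = 1 ∧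
      r = (eLpNorm (kernelOp μ κ f) 2 μ).toReal} := by
    refine ⟨(eLpNorm (fun p : X × X => κ p.1 p.2) 2 (μ.prod μ)).toReal, ?_⟩
    rintro r ⟨g, hg2, hg1, rfl⟩
    have h1 : eLpNorm (kernelOp μ κ g) 2 μ ≤
        eLpNorm (fun p : X × X => κ p.1 p.2) 2 (μ.prod μ) := by
      simpa [hg1] using kernelOp_eLpNorm_le hκ hg2.aestronglyMeasurable.aemeasurable
    exact ENNReal.toReal_mono hκ_HS.2.ne h1
  rcases eq_or_ne (eLpNorm f 2 μ) 0 with h0 | h0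
  · have hf0 : f =ᵐ[μ] 0 := (eLpNorm_eq_zero_iff hf2.aestronglyMeasurable two_ne_zero).mp h0
    have : kernelOp μ κ f = kernelOp μ κ (0 : X → ℝ) := kernelOp_congr_ae hf0
    rw [this]
    have : kernelOp μ κ (0 : X → ℝ) = (0 : X → ℝ) := by
      funext x; simp [kernelOp]
    rw [this]
    simp
  · set c : ℝ := (eLpNorm f 2 μ).toReal with hc
    have hcpos : 0 < c := ENNReal.toReal_pos h0 hf2.2.ne
    have hcf : eLpNorm f 2 μ = ENNReal.ofReal c := (ENNReal.ofReal_toReal hf2.2.ne).symm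
    set f' : X → ℝ := fun y => c⁻¹ * f y with hf'
    have hf'2 : MemLp f' 2 μ := hf2.const_mul _
    have hsmul : f' = (c⁻¹ : ℝ) • f := rfl
    have hnorm1 : eLpNorm f' 2 μ = 1 := by
      rw [hsmul, eLpNorm_const_smul, hcf]
      rw [← ofReal_norm, Real.norm_of_nonneg (by positivity),
        ← ENNReal.ofReal_mul (by positivity)]
      rw [inv_mul_cancel₀ hcpos.ne']
      simp
    have hlin : kernelOp μ κ f' = fun x => c⁻¹ * kernelOp μ κ f x := by
      funext x
      simp only [kernelOp, hf']
      rw [← integral_const_mul]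
      congr 1; funext y; ring
    have hmem : (eLpNorm (kernelOp μ κ f') 2 μ).toReal ∈
        {r : ℝ | ∃ f : X → ℝ, MemLp f 2 μ ∧ eLpNorm f 2 μ = 1 ∧
          r = (eLpNorm (kernelOp μ κ f) 2 μ).toReal} := ⟨f', hf'2, hnorm1, rfl⟩
    have hle : (eLpNorm (kernelOp μ κ f') 2 μ).toReal ≤ opNorm μ κ := le_csSup hbdd hmem
    have hfin : eLpNorm (kernelOp μ κ f) 2 μ ≠ ∞ :=
      ((kernelOp_eLpNorm_le hκ hf2.aestronglyMeasurable.aemeasurable).trans_lt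
        (ENNReal.mul_lt_top hκ_HS.2 hf2.2)).ne
    have heq : eLpNorm (kernelOp μ κ f') 2 μ =
        ENNReal.ofReal c⁻¹ * eLpNorm (kernelOp μ κ f) 2 μ := by
      have : kernelOp μ κ f' = (c⁻¹ : ℝ) • kernelOp μ κ f := by
        funext x; rw [hlin]; simp [smul_eq_mul]
      rw [this, eLpNorm_const_smul, ← ofReal_norm,
        Real.norm_of_nonneg (by positivity)]
    have htr : (eLpNorm (kernelOp μ κ f') 2 μ).toReal
        = c⁻¹ * (eLpNorm (kernelOp μ κ f) 2 μ).toReal := by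
      rw [heq, ENNReal.toReal_mul, ENNReal.toReal_ofReal (by positivity)]
    rw [htr] at hle
    have hle2 : (eLpNorm (kernelOp μ κ f) 2 μ).toReal ≤ opNorm μ κ * c := by
      calc (eLpNorm (kernelOp μ κ f) 2 μ).toReal
          = c * (c⁻¹ * (eLpNorm (kernelOp μ κ f) 2 μ).toReal) := by
            field_simp
        _ ≤ c * opNorm μ κ := mul_le_mul_of_nonneg_left hle hcpos.le
        _ = opNorm μ κ * c := mul_comm _ _
    calc eLpNorm (kernelOp μ κ f) 2 μ
        = ENNReal.ofReal ((eLpNorm (kernelOp μ κ f) 2 μ).toReal) :=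
          (ENNReal.ofReal_toReal hfin).symm
      _ ≤ ENNReal.ofReal (opNorm μ κ * c) := ENNReal.ofReal_le_ofReal hle2
      _ = ENNReal.ofReal (opNorm μ κ) * ENNReal.ofReal c := ENNReal.ofReal_mul opNorm_nonneg
      _ = ENNReal.ofReal (opNorm μ κ) * eLpNorm f 2 μ := by rw [hcf]

end Aux

section Main

variable {X : Type*} [MeasurableSpace X] {μ : Measure X} [IsFiniteMeasure μ] {κ : X → X → ℝ}

lemma ae_row_memL2 (hκ : Measurable (fun p : X × X => κ p.1 p.2))
    (hκ_HS : MemLp (fun p : X × X => κ p.1 p.2) 2 (μ.prod μ)) :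
    ∀ᵐ x ∂μ, MemLp (fun y => κ x y) 2 μ := by
  have h2 := hκ_HS.2
  rw [eLpNorm_two_eq_lintegral_nnnorm] at h2
  have hfin : ∫⁻ p : X × X, (‖κ p.1 p.2‖₊ : ℝ≥0∞) ^ (2:ℝ) ∂(μ.prod μ) < ∞ :=
    (ENNReal.rpow_lt_top_iff_of_pos (by norm_num : (0:ℝ) < 1/2)).mp h2
  rw [lintegral_prod (fun p : X × X => (‖κ p.1 p.2‖₊ : ℝ≥0∞) ^ (2:ℝ)) (hκ.enorm.pow_const _).aemeasurable] at hfin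
  have hae := ae_lt_top (Measurable.lintegral_prod_right (hκ.enorm.pow_const _)) hfin.ne
  filter_upwards [hae] with x hx
  refine ⟨(hκ.comp measurable_prodMk_left).aestronglyMeasurable, ?_⟩
  rw [eLpNorm_two_eq_lintegral_nnnorm]
  exact ENNReal.rpow_lt_top_of_nonneg (by norm_num) hx.ne

theorem kIter_le_opNorm_pow'
    (φ : X → ℝ)
    (hκ_meas : Measurable (fun p : X × X => κ p.1 p.2))
    (hκ_nonneg : ∀ x y, 0 ≤ κ x y)
    (hκ_HS : MemLp (fun p : X × X => κ p.1 p.2) 2 (μ.prod μ))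
    (hφ_meas : Measurable φ)
    (hφ_nonneg : ∀ x, 0 ≤ φ x)
    (hφ_L2 : MemLp φ 2 μ) :
    ∀ n : ℕ, 1 ≤ n → ∀ x : X, MemLp (fun y => κ x y) 2 μ →
      kIter μ κ φ n x ≤ ENNReal.ofReal
        (opNorm μ κ ^ (n - 1) * (eLpNorm (fun y => κ x y) 2 μ).toReal *
          (eLpNorm φ 2 μ).toReal) := by
  set g : ℕ → X → ℝ := fun n => (kernelOp μ κ)^[n] φ with hg
  have hg_succ : ∀ m, g (m+1) = kernelOp μ κ (g m) := fun m =>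
    Function.iterate_succ_apply' _ _ _
  have hpack : ∀ m : ℕ, Measurable (g m) ∧ (∀ u, 0 ≤ g m u) ∧ MemLp (g m) 2 μ ∧
      eLpNorm (g m) 2 μ ≤ ENNReal.ofReal (opNorm μ κ ^ m) * eLpNorm φ 2 μ := by
    intro m
    induction m with
    | zero => exact ⟨hφ_meas, hφ_nonneg, hφ_L2, by rw [show g 0 = φ from rfl]; simp⟩
    | succ m ih =>
      obtain ⟨hm, hnn, hL2, hbd⟩ := ih
      have hmeas' : Measurable (g (m+1)) := by
        rw [hg_succ]; exact (kernelOp_sm hκ_meas hm).measurable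
      have hnn' : ∀ u, 0 ≤ g (m+1) u := by
        intro u; rw [hg_succ]
        exact integral_nonneg fun y => mul_nonneg (hκ_nonneg u y) (hnn y)
      have hle : eLpNorm (g (m+1)) 2 μ ≤ ENNReal.ofReal (opNorm μ κ) * eLpNorm (g m) 2 μ := by
        rw [hg_succ]; exact kernelOp_le_opNorm hκ_meas hκ_HS hL2
      have hL2' : MemLp (g (m+1)) 2 μ :=
        ⟨hmeas'.aestronglyMeasurable,
          hle.trans_lt (ENNReal.mul_lt_top ENNReal.ofReal_lt_top hL2.2)⟩
      refine ⟨hmeas', hnn', hL2', ?_⟩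
      calc eLpNorm (g (m+1)) 2 μ ≤ ENNReal.ofReal (opNorm μ κ) * eLpNorm (g m) 2 μ := hle
        _ ≤ ENNReal.ofReal (opNorm μ κ) * (ENNReal.ofReal (opNorm μ κ ^ m) * eLpNorm φ 2 μ) :=
            mul_le_mul_right hbd _
        _ = ENNReal.ofReal (opNorm μ κ ^ (m+1)) * eLpNorm φ 2 μ := by
            rw [← mul_assoc, ← ENNReal.ofReal_mul opNorm_nonneg, ← pow_succ']
  have hrow : ∀ᵐ u ∂μ, MemLp (fun y => κ u y) 2 μ := ae_row_memL2 hκ_meas hκ_HS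
  have hae : ∀ m : ℕ, ∀ᵐ u ∂μ, kIter μ κ φ m u = ENNReal.ofReal (g m u) := by
    intro m
    induction m with
    | zero => exact Filter.Eventually.of_forall fun u => rfl
    | succ m ih =>
      filter_upwards [hrow] with u hu
      have h1 : kIter μ κ φ (m+1) u = ∫⁻ y, ENNReal.ofReal (κ u y) * kIter μ κ φ m y ∂μ := rfl
      have hint : Integrable (fun y => κ u y * g m y) μ := by
        have hsm : MemLp ((fun y => κ u y) • (g m)) 1 μ :=
          MemLp.smul (hpack m).2.2.1 hu (hpqr := ⟨by simp only [inv_one]; exact ENNReal.inv_two_add_inv_two⟩)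
        exact memLp_one_iff_integrable.mp hsm
      have h1' : (∫⁻ y, ENNReal.ofReal (κ u y) * kIter μ κ φ m y ∂μ)
          = ∫⁻ y, ENNReal.ofReal (κ u y) * ENNReal.ofReal (g m y) ∂μ :=
        lintegral_congr_ae (ih.mono fun y hy => by simp only [hy])
      rw [h1, h1']
      have h2 : (∫⁻ y, ENNReal.ofReal (κ u y) * ENNReal.ofReal (g m y) ∂μ)
          = ∫⁻ y, ENNReal.ofReal (κ u y * g m y) ∂μ :=
        lintegral_congr fun y => (ENNReal.ofReal_mul (hκ_nonneg u y)).symm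
      rw [h2, ← ofReal_integral_eq_lintegral_ofReal hint
        (Filter.Eventually.of_forall fun y => mul_nonneg (hκ_nonneg u y) ((hpack m).2.1 y))]
      rw [hg_succ]
      rfl
  intro n hn x hx
  obtain ⟨m, rfl⟩ : ∃ m, n = m + 1 := ⟨n - 1, (Nat.succ_pred_eq_of_pos hn).symm⟩
  have h1 : kIter μ κ φ (m+1) x = ∫⁻ u, ENNReal.ofReal (κ x u) * ENNReal.ofReal (g m u) ∂μ :=
    lintegral_congr_ae ((hae m).mono fun u hu => by simp only [hu])
  have hCS : (∫⁻ u, ENNReal.ofReal (κ x u) * ENNReal.ofReal (g m u) ∂μ)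
      ≤ eLpNorm (fun y => κ x y) 2 μ * eLpNorm (g m) 2 μ := by
    calc (∫⁻ u, ENNReal.ofReal (κ x u) * ENNReal.ofReal (g m u) ∂μ)
        ≤ (∫⁻ u, ENNReal.ofReal (κ x u) ^ (2:ℝ) ∂μ) ^ (1/2:ℝ) *
            (∫⁻ u, ENNReal.ofReal (g m u) ^ (2:ℝ) ∂μ) ^ (1/2:ℝ) :=
          holder2 ((hκ_meas.comp measurable_prodMk_left).ennreal_ofReal.aemeasurable)
            ((hpack m).1.ennreal_ofReal.aemeasurable)
      _ = eLpNorm (fun y => κ x y) 2 μ * eLpNorm (g m) 2 μ := by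
          rw [← eLpNorm_two_eq_lintegral_ofReal (hκ_nonneg x),
            ← eLpNorm_two_eq_lintegral_ofReal (hpack m).2.1]
  calc kIter μ κ φ (m+1) x
      ≤ eLpNorm (fun y => κ x y) 2 μ * eLpNorm (g m) 2 μ := h1 ▸ hCS
    _ ≤ eLpNorm (fun y => κ x y) 2 μ * (ENNReal.ofReal (opNorm μ κ ^ m) * eLpNorm φ 2 μ) :=
        mul_le_mul_right (hpack m).2.2.2 _
    _ = ENNReal.ofReal ((eLpNorm (fun y => κ x y) 2 μ).toReal) *
          (ENNReal.ofReal (opNorm μ κ ^ m) * ENNReal.ofReal ((eLpNorm φ 2 μ).toReal)) := by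
        rw [ENNReal.ofReal_toReal hx.2.ne, ENNReal.ofReal_toReal hφ_L2.2.ne]
    _ = ENNReal.ofReal (opNorm μ κ ^ (m + 1 - 1) * (eLpNorm (fun y => κ x y) 2 μ).toReal *
          (eLpNorm φ 2 μ).toReal) := by
        rw [← ENNReal.ofReal_mul (pow_nonneg opNorm_nonneg m),
          ← ENNReal.ofReal_mul ENNReal.toReal_nonneg]
        congr 1
        simp only [Nat.add_sub_cancel]
        ring

end Main

/-- Contraction estimate for iterated kernels: for `n ≥ 1` and any `x` with
`f_x = κ(x,·) ∈ L²(μ)`, one has `(𝒦ⁿφ)(x) ≤ ρ(κ)^{n−1} ‖f_x‖₂ ‖φ‖₂`. -/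
theorem kIter_le_opNorm_pow
    {X : Type*} [MeasurableSpace X] (μ : Measure X) [IsFiniteMeasure μ]
    (κ : X → X → ℝ) (φ : X → ℝ)
    (hκ_meas : Measurable (fun p : X × X => κ p.1 p.2))
    (hκ_nonneg : ∀ x y, 0 ≤ κ x y)
    (hκ_HS : MemLp (fun p : X × X => κ p.1 p.2) 2 (μ.prod μ))
    (hφ_meas : Measurable φ)
    (hφ_nonneg : ∀ x, 0 ≤ φ x)
    (hφ_L2 : MemLp φ 2 μ) :
    ∀ n : ℕ, 1 ≤ n → ∀ x : X, MemLp (fun y => κ x y) 2 μ →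
      kIter μ κ φ n x ≤ ENNReal.ofReal
        (opNorm μ κ ^ (n - 1) * (eLpNorm (fun y => κ x y) 2 μ).toReal *
          (eLpNorm φ 2 μ).toReal) :=
  kIter_le_opNorm_pow' φ hκ_meas hκ_nonneg hκ_HS hφ_meas hφ_nonneg hφ_L2
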